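/- For every natural number k, ∫_0^∞ u^k · u^{-ln u} · sin(2π ln u) du = 0. -/
import Mathlib


open Real MeasureTheory

lemma odd_gauss_sin_integral_zero (c : ℝ) :
    (∫ x : ℝ, Real.exp (-x ^ 2) * Real.sin (c * x)) = 0 := by
  have h := MeasureTheory.integral_neg_eq_self
    (fun x : ℝ => Real.exp (-x ^ 2) * Real.sin (c * x)) (volume : Measure ℝ)
  have h2 : (∫ x : ℝ, Real.exp (-(-x) ^ 2) * Real.sin (c * -x))
      = -∫ x : ℝ, Real.exp (-x ^ 2) * Real.sin (c * x) := by
    rw [← MeasureTheory.integral_neg]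
    congr 1
    funext x
    simp [mul_comm, Real.sin_neg, mul_neg]
  rw [h2] at h
  linarith

theorem stieltjes_vanishing_lemma (k : ℕ) :
    (∫ u in Set.Ioi (0 : ℝ),
        u ^ k * u ^ (-Real.log u) * Real.sin (2 * π * Real.log u)) = 0 := by
  have himg : Set.Ioi (0:ℝ) = Real.exp '' Set.univ := by
    rw [Set.image_univ, Real.range_exp]
  rw [himg, integral_image_eq_integral_abs_deriv_smul MeasurableSet.univ
    (fun x _ => (Real.hasDerivAt_exp x).hasDerivWithinAt)
    (Real.exp_injective.injOn)]
  rw [Measure.restrict_univ]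
  set c : ℝ := (k + 1) / 2 with hc
  have key : ∀ x : ℝ,
      |Real.exp x| • (Real.exp x ^ k * Real.exp x ^ (-Real.log (Real.exp x)) *
        Real.sin (2 * π * Real.log (Real.exp x)))
      = Real.exp (c ^ 2) * (Real.exp (-(x - c) ^ 2) * Real.sin (2 * π * x)) := by
    intro x
    rw [abs_of_pos (Real.exp_pos x), Real.log_exp, smul_eq_mul,
      Real.rpow_def_of_pos (Real.exp_pos x), Real.log_exp, ← Real.exp_nat_mul,
      ← Real.exp_add, ← mul_assoc, ← Real.exp_add]
    rw [← mul_assoc, ← Real.exp_add]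
    congr 2
    push_cast [hc]
    ring
  simp_rw [key]
  rw [integral_const_mul]
  have hshift : (∫ x : ℝ, Real.exp (-(x - c) ^ 2) * Real.sin (2 * π * x))
      = ∫ x : ℝ, Real.exp (-x ^ 2) * Real.sin (2 * π * (x + c)) := by
    rw [← MeasureTheory.integral_add_right_eq_self
      (fun x : ℝ => Real.exp (-(x - c) ^ 2) * Real.sin (2 * π * x)) c]
    simp
  rw [hshift]
  have hsin : ∀ x : ℝ, Real.sin (2 * π * (x + c))
      = Real.cos ((k + 1 : ℕ) * π) * Real.sin (2 * π * x) := by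
    intro x
    have : 2 * π * (x + c) = 2 * π * x + (k + 1 : ℕ) * π := by
      push_cast [hc]; ring
    rw [this, Real.sin_add, Real.sin_nat_mul_pi]
    ring
  have : (∫ x : ℝ, Real.exp (-x ^ 2) * Real.sin (2 * π * (x + c)))
      = Real.cos ((k + 1 : ℕ) * π) * ∫ x : ℝ, Real.exp (-x ^ 2) * Real.sin (2 * π * x) := by
    rw [← integral_const_mul]
    congr 1; funext x; rw [hsin x]; ring
  rw [this, odd_gauss_sin_integral_zero, mul_zero, mul_zero]
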